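/- Fix ε ∈ (0, π/2) and set θ₁ := -3π/2 + ε, θ₂ := π/2 - ε. For ξ = r e^{iθ} with r > 0 and θ ∈ (-3π/2, π/2), define ξ^{1/2} := r^{1/2} e^{iθ/2}. Then for every σ ∈ ℂ* and every τ ∈ ℂ* with ε < arg τ < π - ε, one has τ^{1/2} e^{σ² τ} = (1/(2 π^{1/2})) [ -∫_0^∞ e^{-r e^{iθ₁}/τ} (r e^{iθ₁})^{-1/2} e^{-2σ (r e^{iθ₁})^{1/2}} e^{iθ₁} dr + ∫_0^∞ e^{-r e^{iθ₂}/τ} (r e^{iθ₂})^{-1/2} e^{-2σ (r e^{iθ₂})^{1/2}} e^{iθ₂} dr ], where τ^{1/2} is the branch with arg(τ^{1/2}) ∈ (0, π/2); both integrals converge absolutely. -/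

import Mathlib

open Complex Filter MeasureTheory

open Set Real Filter MeasureTheory Complex



lemma aux_int_exp {γ : ℝ} (hγ : 0 < γ) (δ : ℝ) :
    Integrable (fun t : ℝ => Real.exp (-γ * t ^ 2 + δ * t)) := by
  have h := (integrable_cexp_quadratic (b := (γ : ℂ)) (by simpa using hγ) (δ : ℂ) 0).norm
  refine h.congr (Eventually.of_forall fun t => ?_)
  show ‖cexp _‖ = _
  have he : (-(γ:ℂ) * (t:ℂ) ^ 2 + (δ:ℂ) * (t:ℂ) + 0) = ((-γ * t ^ 2 + δ * t : ℝ) : ℂ) := by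
    push_cast; ring
  rw [he, Complex.norm_exp, Complex.ofReal_re]

lemma aux_int_poly_exp {γ : ℝ} (hγ : 0 < γ) (δ : ℝ) (n : ℕ) :
    Integrable (fun t : ℝ => |t| ^ n * Real.exp (-γ * t ^ 2 + δ * t)) := by
  have hcont : Continuous fun t : ℝ => |t| ^ n * Real.exp (-γ * t ^ 2 + δ * t) := by
    fun_prop
  refine Integrable.mono' ((aux_int_exp hγ (δ + n)).add (aux_int_exp hγ (δ - n)))
    hcont.aestronglyMeasurable (Eventually.of_forall fun t => ?_)
  have h1 : |t| ^ n ≤ Real.exp (n * |t|) := by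
    calc |t| ^ n ≤ Real.exp |t| ^ n :=
          pow_le_pow_left₀ (abs_nonneg t) ((le_add_of_nonneg_left zero_le_one).trans
            (by simpa [add_comm] using Real.add_one_le_exp |t|)) n
      _ = Real.exp (n * |t|) := by rw [← Real.exp_nat_mul]
  have h2 : Real.exp (n * |t|) ≤ Real.exp (n * t) + Real.exp (-(n * t)) := by
    rcases abs_cases t with ⟨h, _⟩ | ⟨h, _⟩
    · rw [h]; exact le_add_of_nonneg_right (Real.exp_pos _).le
    · rw [h, mul_neg]; exact le_add_of_nonneg_left (Real.exp_pos _).le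
  rw [Real.norm_eq_abs, _root_.abs_of_nonneg (show (0:ℝ) ≤ _ by positivity)]
  simp only [Pi.add_apply]
  calc |t| ^ n * Real.exp (-γ * t ^ 2 + δ * t)
      ≤ (Real.exp (n * t) + Real.exp (-(n * t))) * Real.exp (-γ * t ^ 2 + δ * t) := by
        gcongr; exact h1.trans h2
    _ = Real.exp (-γ * t ^ 2 + (δ + n) * t) + Real.exp (-γ * t ^ 2 + (δ - n) * t) := by
        rw [add_mul, ← Real.exp_add, ← Real.exp_add]; ring_nf

lemma aux_int_poly_exp_abs {γ : ℝ} (hγ : 0 < γ) (δ : ℝ) (n : ℕ) :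
    Integrable (fun t : ℝ => |t| ^ n * Real.exp (-γ * t ^ 2 + δ * |t|)) := by
  have hcont : Continuous fun t : ℝ => |t| ^ n * Real.exp (-γ * t ^ 2 + δ * |t|) := by
    fun_prop
  refine Integrable.mono' ((aux_int_poly_exp hγ δ n).add (aux_int_poly_exp hγ (-δ) n))
    hcont.aestronglyMeasurable (Eventually.of_forall fun t => ?_)
  rw [Real.norm_eq_abs, _root_.abs_of_nonneg (show (0:ℝ) ≤ _ by positivity)]
  simp only [Pi.add_apply]
  rcases abs_cases t with ⟨h, h0⟩ | ⟨h, h0⟩ <;> rw [h]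
  · exact le_add_of_nonneg_right (mul_nonneg (pow_nonneg h0 n) (Real.exp_pos _).le)
  · have he : -γ * t ^ 2 + δ * -t = -γ * t ^ 2 + -δ * t := by ring
    rw [he]
    exact le_add_of_nonneg_left (mul_nonneg (pow_nonneg (by linarith) n) (Real.exp_pos _).le)



noncomputable def kk (σ τ : ℂ) (α t : ℝ) : ℂ :=
  Complex.exp (-(Complex.exp (2*(α:ℂ)*Complex.I)/τ) * (t:ℂ)^2 +
    (-2*σ*Complex.exp ((α:ℂ)*Complex.I)) * (t:ℂ) + (α:ℂ)*Complex.I)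

lemma norm_kk (σ τ : ℂ) (α t : ℝ) :
    ‖kk σ τ α t‖ = Real.exp (-(Complex.exp (2*(α:ℂ)*Complex.I)/τ).re * t^2 +
      (-2*σ*Complex.exp ((α:ℂ)*Complex.I)).re * t) := by
  rw [kk, Complex.norm_exp]
  congr 1
  set b := Complex.exp (2*(α:ℂ)*Complex.I)/τ
  set c := -2*σ*Complex.exp ((α:ℂ)*Complex.I)
  simp [Complex.add_re, Complex.mul_re, Complex.ofReal_re, Complex.ofReal_im,
    Complex.I_re, Complex.I_im, Complex.neg_re, Complex.neg_im, pow_two]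

lemma continuous_kk_t (σ τ : ℂ) (α : ℝ) : Continuous fun t : ℝ => kk σ τ α t := by
  unfold kk; fun_prop

lemma integrable_tpow_kk (σ τ : ℂ) (n : ℕ) {α : ℝ}
    (hb : 0 < (Complex.exp (2*(α:ℂ)*Complex.I)/τ).re) :
    Integrable (fun t : ℝ => (t:ℂ)^n * kk σ τ α t) := by
  refine Integrable.mono'
    (aux_int_poly_exp hb ((-2*σ*Complex.exp ((α:ℂ)*Complex.I)).re) n)
    (((Complex.continuous_ofReal.pow n).mul (continuous_kk_t σ τ α)).aestronglyMeasurable)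
    (Eventually.of_forall fun t => ?_)
  rw [norm_mul, norm_pow, Complex.norm_real, Real.norm_eq_abs, norm_kk]

lemma hasDerivAt_kk_t (σ τ : ℂ) (α t : ℝ) :
    HasDerivAt (fun t : ℝ => kk σ τ α t)
      (kk σ τ α t * (-(Complex.exp (2*(α:ℂ)*Complex.I)/τ) * (2*(t:ℂ)) +
        (-2*σ*Complex.exp ((α:ℂ)*Complex.I)))) t := by
  set b := Complex.exp (2*(α:ℂ)*Complex.I)/τ with hbdef
  set c := -2*σ*Complex.exp ((α:ℂ)*Complex.I) with hcdef
  have hp : HasDerivAt (fun z : ℂ => -b*z^2 + c*z + ((α:ℂ)*Complex.I))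
      (-b*(2*(t:ℂ)) + c) (t:ℂ) := by
    have h1 := (hasDerivAt_pow 2 ((t:ℂ))).const_mul (-b)
    have h2 := (hasDerivAt_id ((t:ℂ))).const_mul c
    have := (h1.add h2).add_const ((α:ℂ)*Complex.I)
    refine this.congr_deriv ?_
    push_cast; ring
  exact hp.cexp.comp_ofReal

lemma hasDerivAt_tkk (σ τ : ℂ) (α t : ℝ) :
    HasDerivAt (fun t : ℝ => (t:ℂ) * kk σ τ α t)
      (kk σ τ α t * (1 + (-2*σ*Complex.exp ((α:ℂ)*Complex.I)) * (t:ℂ)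
        - 2*(Complex.exp (2*(α:ℂ)*Complex.I)/τ) * (t:ℂ)^2)) t := by
  have h1 : HasDerivAt (fun t : ℝ => ((t:ℝ):ℂ)) 1 t := Complex.ofRealCLM.hasDerivAt
  have := h1.mul (hasDerivAt_kk_t σ τ α t)
  refine this.congr_deriv ?_
  ring

noncomputable def DD (σ τ : ℂ) (α t : ℝ) : ℂ :=
  Complex.I * (kk σ τ α t * (1 + (-2*σ*Complex.exp ((α:ℂ)*Complex.I)) * (t:ℂ)
    - 2*(Complex.exp (2*(α:ℂ)*Complex.I)/τ) * (t:ℂ)^2))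

lemma hasDerivAt_kk_alpha (σ τ : ℂ) (t α : ℝ) :
    HasDerivAt (fun α : ℝ => kk σ τ α t) (DD σ τ α t) α := by
  have h1 : HasDerivAt (fun z : ℂ => Complex.exp (2*z*Complex.I))
      (Complex.exp (2*(α:ℂ)*Complex.I) * (2*Complex.I)) (α:ℂ) := by
    have := ((hasDerivAt_id ((α:ℂ))).const_mul (2:ℂ)).mul_const Complex.I
    simp only [mul_one] at this
    exact this.cexp
  have h2 : HasDerivAt (fun z : ℂ => Complex.exp (z*Complex.I))
      (Complex.exp ((α:ℂ)*Complex.I) * Complex.I) (α:ℂ) := by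
    have := (hasDerivAt_id ((α:ℂ))).mul_const Complex.I
    simp only [one_mul, id_eq] at this
    exact this.cexp
  have hQ : HasDerivAt (fun z : ℂ => -(Complex.exp (2*z*Complex.I)/τ) * (t:ℂ)^2 +
      (-2*σ*Complex.exp (z*Complex.I)) * (t:ℂ) + z*Complex.I)
      (-(Complex.exp (2*(α:ℂ)*Complex.I) * (2*Complex.I)/τ) * (t:ℂ)^2 +
        (-2*σ*(Complex.exp ((α:ℂ)*Complex.I) * Complex.I)) * (t:ℂ) + Complex.I) (α:ℂ) := by
    have ha := ((h1.div_const τ).neg.mul_const ((t:ℂ)^2)).add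
      ((h2.const_mul (-2*σ)).mul_const ((t:ℂ)))
    have hb := ha.add ((hasDerivAt_id ((α:ℂ))).mul_const Complex.I)
    refine hb.congr_deriv ?_
    ring
  have := hQ.cexp.comp_ofReal
  refine this.congr_deriv ?_
  rw [DD, kk]
  ring

lemma re_exp_div (τ : ℂ) (hτ : τ ≠ 0) (x : ℝ) :
    (Complex.exp ((x:ℂ)*Complex.I)/τ).re = (‖τ‖)⁻¹ * Real.cos (x - τ.arg) := by
  conv_lhs => rw [← Complex.norm_mul_exp_arg_mul_I τ]
  have habs : (‖τ‖) ≠ 0 := by simpa using hτ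
  have h : Complex.exp ((x:ℂ)*Complex.I) / ((‖τ‖ : ℂ) * Complex.exp ((τ.arg:ℂ)*Complex.I))
      = (((‖τ‖)⁻¹ : ℝ) : ℂ) * Complex.exp (((x - τ.arg : ℝ):ℂ)*Complex.I) := by
    push_cast
    rw [sub_mul, Complex.exp_sub]
    field_simp
  rw [h, Complex.re_ofReal_mul, Complex.exp_ofReal_mul_I_re]

lemma tendsto_abs_gauss {γ : ℝ} (hγ : 0 < γ) (δ : ℝ) :
    Tendsto (fun t : ℝ => |t| * Real.exp (-γ*t^2 + δ*t)) atTop (nhds 0) := by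
  have hg : Tendsto (fun t : ℝ => t * Real.exp (-t)) atTop (nhds 0) := by
    simpa using tendsto_pow_mul_exp_neg_atTop_nhds_zero 1
  refine squeeze_zero' (Eventually.of_forall fun t => by positivity) ?_ hg
  filter_upwards [Filter.eventually_ge_atTop ((δ+1)/γ), Filter.eventually_ge_atTop 0]
    with t ht ht0
  rw [_root_.abs_of_nonneg ht0]
  gcongr
  have : (δ + 1) * t ≤ γ * t^2 := by
    rw [pow_two, ← mul_assoc]
    apply mul_le_mul_of_nonneg_right _ ht0
    rw [div_le_iff₀ hγ] at ht
    linarith [ht]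
  linarith

lemma tendsto_tkk_atTop (σ τ : ℂ) {α : ℝ}
    (hb : 0 < (Complex.exp (2*(α:ℂ)*Complex.I)/τ).re) :
    Tendsto (fun t : ℝ => (t:ℂ) * kk σ τ α t) atTop (nhds 0) := by
  rw [tendsto_zero_iff_norm_tendsto_zero]
  refine (tendsto_abs_gauss hb ((-2*σ*Complex.exp ((α:ℂ)*Complex.I)).re)).congr fun t => ?_
  rw [norm_mul, Complex.norm_real, Real.norm_eq_abs, norm_kk]

lemma tendsto_tkk_atBot (σ τ : ℂ) {α : ℝ}
    (hb : 0 < (Complex.exp (2*(α:ℂ)*Complex.I)/τ).re) :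
    Tendsto (fun t : ℝ => (t:ℂ) * kk σ τ α t) atBot (nhds 0) := by
  rw [tendsto_zero_iff_norm_tendsto_zero]
  have h := (tendsto_abs_gauss hb (-((-2*σ*Complex.exp ((α:ℂ)*Complex.I)).re))).comp
    tendsto_neg_atBot_atTop
  refine h.congr fun t => ?_
  simp only [Function.comp_apply]
  rw [norm_mul, Complex.norm_real, Real.norm_eq_abs, norm_kk, abs_neg, neg_pow]
  ring_nf

lemma integrable_comb_kk (σ τ : ℂ) {α : ℝ}
    (hb : 0 < (Complex.exp (2*(α:ℂ)*Complex.I)/τ).re) :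
    Integrable (fun t : ℝ => kk σ τ α t * (1 + (-2*σ*Complex.exp ((α:ℂ)*Complex.I)) * (t:ℂ)
      - 2*(Complex.exp (2*(α:ℂ)*Complex.I)/τ) * (t:ℂ)^2)) := by
  have h := ((integrable_tpow_kk σ τ 0 hb).add
      ((integrable_tpow_kk σ τ 1 hb).const_mul (-2*σ*Complex.exp ((α:ℂ)*Complex.I)))).sub
    ((integrable_tpow_kk σ τ 2 hb).const_mul (2*(Complex.exp (2*(α:ℂ)*Complex.I)/τ)))
  refine h.congr (Eventually.of_forall fun t => ?_)
  simp only [Pi.add_apply, Pi.sub_apply, pow_zero, pow_one, one_mul]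
  ring

lemma integral_DD_Ioi (σ τ : ℂ) {α : ℝ}
    (hb : 0 < (Complex.exp (2*(α:ℂ)*Complex.I)/τ).re) :
    ∫ t in Ioi (0:ℝ), DD σ τ α t = 0 := by
  have key : ∫ t in Ioi (0:ℝ), (kk σ τ α t * (1 + (-2*σ*Complex.exp ((α:ℂ)*Complex.I)) * (t:ℂ)
      - 2*(Complex.exp (2*(α:ℂ)*Complex.I)/τ) * (t:ℂ)^2)) = 0 := by
    have h := integral_Ioi_of_hasDerivAt_of_tendsto'
      (f := fun t : ℝ => (t:ℂ) * kk σ τ α t) (a := 0)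
      (fun x _ => hasDerivAt_tkk σ τ α x)
      ((integrable_comb_kk σ τ hb).integrableOn)
      (tendsto_tkk_atTop σ τ hb)
    simpa using h
  calc ∫ t in Ioi (0:ℝ), DD σ τ α t
      = Complex.I * ∫ t in Ioi (0:ℝ), (kk σ τ α t * (1 + (-2*σ*Complex.exp ((α:ℂ)*Complex.I)) * (t:ℂ)
        - 2*(Complex.exp (2*(α:ℂ)*Complex.I)/τ) * (t:ℂ)^2)) := by
        rw [← MeasureTheory.integral_const_mul]; rfl
    _ = 0 := by rw [key, mul_zero]

lemma integral_DD_Iic (σ τ : ℂ) {α : ℝ}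
    (hb : 0 < (Complex.exp (2*(α:ℂ)*Complex.I)/τ).re) :
    ∫ t in Iic (0:ℝ), DD σ τ α t = 0 := by
  have key : ∫ t in Iic (0:ℝ), (kk σ τ α t * (1 + (-2*σ*Complex.exp ((α:ℂ)*Complex.I)) * (t:ℂ)
      - 2*(Complex.exp (2*(α:ℂ)*Complex.I)/τ) * (t:ℂ)^2)) = 0 := by
    have h := integral_Iic_of_hasDerivAt_of_tendsto'
      (f := fun t : ℝ => (t:ℂ) * kk σ τ α t) (a := 0)
      (fun x _ => hasDerivAt_tkk σ τ α x)
      ((integrable_comb_kk σ τ hb).integrableOn)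
      (tendsto_tkk_atBot σ τ hb)
    simpa using h
  calc ∫ t in Iic (0:ℝ), DD σ τ α t
      = Complex.I * ∫ t in Iic (0:ℝ), (kk σ τ α t * (1 + (-2*σ*Complex.exp ((α:ℂ)*Complex.I)) * (t:ℂ)
        - 2*(Complex.exp (2*(α:ℂ)*Complex.I)/τ) * (t:ℂ)^2)) := by
        rw [← MeasureTheory.integral_const_mul]; rfl
    _ = 0 := by rw [key, mul_zero]

lemma integrable_kk (σ τ : ℂ) {α : ℝ}
    (hb : 0 < (Complex.exp (2*(α:ℂ)*Complex.I)/τ).re) :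
    Integrable (fun t : ℝ => kk σ τ α t) := by
  refine (integrable_tpow_kk σ τ 0 hb).congr (Eventually.of_forall fun t => ?_)
  simp

lemma continuous_DD_t (σ τ : ℂ) (α : ℝ) : Continuous fun t : ℝ => DD σ τ α t := by
  unfold DD
  exact continuous_const.mul ((continuous_kk_t σ τ α).mul (by fun_prop))

lemma norm_exp_I (x : ℝ) : ‖(Complex.exp ((x:ℂ)*Complex.I))‖ = 1 :=
  Complex.norm_exp_ofReal_mul_I x

lemma norm_exp_2I (α : ℝ) : ‖(Complex.exp (2*(α:ℂ)*Complex.I))‖ = 1 := by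
  rw [Complex.norm_exp]
  simp

lemma hasDerivAt_F (σ τ : ℂ) (hτ : τ ≠ 0) (S : Set ℝ) {α₀ : ℝ}
    (hb : 0 < (Complex.exp (2*(α₀:ℂ)*Complex.I)/τ).re) :
    HasDerivAt (fun α : ℝ => ∫ t in S, kk σ τ α t) (∫ t in S, DD σ τ α₀ t) α₀ := by
  set φ : ℝ → ℝ := fun α => (Complex.exp (2*(α:ℂ)*Complex.I)/τ).re with hφdef
  have hφ : Continuous φ := by
    apply Complex.continuous_re.comp
    fun_prop
  set γ : ℝ := φ α₀ / 2 with hγdef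
  have hγ : 0 < γ := by simpa [hγdef] using half_pos hb
  have hγlt : γ < φ α₀ := by
    have := hb
    simp only [hγdef]
    linarith [half_lt_self hb]
  have hmem : φ ⁻¹' (Ioi γ) ∈ nhds α₀ :=
    hφ.continuousAt.preimage_mem_nhds (Ioi_mem_nhds hγlt)
  obtain ⟨ε, hε, hball⟩ := Metric.mem_nhds_iff.mp hmem
  set g : ℝ → ℝ := fun t => (1 + 2*‖σ‖*|t| + 2*(‖τ‖)⁻¹*t^2) *
    Real.exp (-γ*t^2 + 2*‖σ‖*|t|) with hgdef
  have main := hasDerivAt_integral_of_dominated_loc_of_deriv_le (μ := volume.restrict S)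
    (F := fun α t => kk σ τ α t) (F' := fun α t => DD σ τ α t) (x₀ := α₀)
    (bound := g) (Metric.ball_mem_nhds α₀ hε)
    (Eventually.of_forall fun α => (continuous_kk_t σ τ α).aestronglyMeasurable.restrict)
    ((integrable_kk σ τ hb).restrict)
    ((continuous_DD_t σ τ α₀).aestronglyMeasurable.restrict)
    ?_ ?_ ?_
  · exact main.2
  · refine Eventually.of_forall fun t => fun α hα => ?_
    have hγα : γ < φ α := hball hα
    have hnormc : ‖(-2*σ*Complex.exp ((α:ℂ)*Complex.I))‖ = 2*‖σ‖ := by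
      rw [norm_mul, norm_mul, norm_exp_I]
      simp
    have hnormb : ‖(Complex.exp (2*(α:ℂ)*Complex.I)/τ)‖ = (‖τ‖)⁻¹ := by
      rw [norm_div, norm_exp_2I, one_div]
    have h1 : ‖DD σ τ α t‖ = ‖kk σ τ α t‖ *
        ‖1 + (-2*σ*Complex.exp ((α:ℂ)*Complex.I)) * (t:ℂ)
          - 2*(Complex.exp (2*(α:ℂ)*Complex.I)/τ) * (t:ℂ)^2‖ := by
      rw [DD, norm_mul, norm_mul, Complex.norm_I, one_mul]
    have hb1 : ‖(-2*σ*Complex.exp ((α:ℂ)*Complex.I)) * (t:ℂ)‖ = 2*‖σ‖*|t| := by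
      rw [norm_mul, Complex.norm_real, Real.norm_eq_abs, hnormc]
    have hb2 : ‖2*(Complex.exp (2*(α:ℂ)*Complex.I)/τ) * (t:ℂ)^2‖
        = 2*(‖τ‖)⁻¹*t^2 := by
      simp only [norm_mul, norm_pow, Complex.norm_real, Real.norm_eq_abs,
        hnormb, sq_abs, Complex.norm_two]
    have h2 : ‖1 + (-2*σ*Complex.exp ((α:ℂ)*Complex.I)) * (t:ℂ)
        - 2*(Complex.exp (2*(α:ℂ)*Complex.I)/τ) * (t:ℂ)^2‖
        ≤ 1 + 2*‖σ‖*|t| + 2*(‖τ‖)⁻¹*t^2 := by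
      refine (norm_sub_le _ _).trans ?_
      rw [hb2]
      gcongr
      refine (norm_add_le _ _).trans ?_
      rw [hb1, norm_one]
    have h3 : ‖kk σ τ α t‖ ≤ Real.exp (-γ*t^2 + 2*‖σ‖*|t|) := by
      rw [norm_kk]
      apply Real.exp_le_exp.2
      have hre : (-2*σ*Complex.exp ((α:ℂ)*Complex.I)).re * t ≤ 2*‖σ‖*|t| := by
        calc (-2*σ*Complex.exp ((α:ℂ)*Complex.I)).re * t
            ≤ |(-2*σ*Complex.exp ((α:ℂ)*Complex.I)).re * t| := le_abs_self _
          _ = |(-2*σ*Complex.exp ((α:ℂ)*Complex.I)).re| * |t| := abs_mul _ _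
          _ ≤ ‖(-2*σ*Complex.exp ((α:ℂ)*Complex.I))‖ * |t| := by
              gcongr; exact Complex.abs_re_le_norm _
          _ = 2*‖σ‖*|t| := by rw [hnormc]
      have ht2 : -(Complex.exp (2*(α:ℂ)*Complex.I)/τ).re * t^2 ≤ -γ * t^2 := by
        have : γ ≤ φ α := hγα.le
        have hφα : φ α = (Complex.exp (2*(α:ℂ)*Complex.I)/τ).re := rfl
        nlinarith [sq_nonneg t]
      linarith
    show ‖DD σ τ α t‖ ≤ (1 + 2*‖σ‖*|t| + 2*(‖τ‖)⁻¹*t^2) *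
      Real.exp (-γ*t^2 + 2*‖σ‖*|t|)
    rw [h1]
    refine le_trans (mul_le_mul h3 h2 (norm_nonneg _) (Real.exp_pos _).le) (le_of_eq ?_)
    ring
  · have hint : Integrable g := by
      have h := ((aux_int_poly_exp_abs hγ (2*‖σ‖) 0).add
          ((aux_int_poly_exp_abs hγ (2*‖σ‖) 1).const_mul (2*‖σ‖))).add
        ((aux_int_poly_exp_abs hγ (2*‖σ‖) 2).const_mul (2*(‖τ‖)⁻¹))
      refine h.congr (Eventually.of_forall fun t => ?_)
      simp only [Pi.add_apply, pow_zero, pow_one, one_mul, hgdef]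
      rw [_root_.sq_abs]
      ring
    exact hint.restrict
  · exact Eventually.of_forall fun t => fun α _ => hasDerivAt_kk_alpha σ τ t α

lemma F_const (σ τ : ℂ) (hτ : τ ≠ 0) (S : Set ℝ)
    (hDD0 : ∀ α : ℝ, 0 < (Complex.exp (2*(α:ℂ)*Complex.I)/τ).re →
      (∫ t in S, DD σ τ α t) = 0)
    {a b : ℝ} (hab : a ≤ b)
    (hpos : ∀ α ∈ Icc a b, 0 < (Complex.exp (2*(α:ℂ)*Complex.I)/τ).re) :
    ∫ t in S, kk σ τ b t = ∫ t in S, kk σ τ a t := by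
  have key : ∀ α ∈ Icc a b, HasDerivAt (fun α => ∫ t in S, kk σ τ α t) 0 α := by
    intro α hα
    have h := hasDerivAt_F σ τ hτ S (hpos α hα)
    rwa [hDD0 α (hpos α hα)] at h
  exact constant_of_has_deriv_right_zero
    (fun α hα => (key α hα).continuousAt.continuousWithinAt)
    (fun α hα => (key α (Ico_subset_Icc_self hα)).hasDerivWithinAt)
    b (right_mem_Icc.2 hab)

lemma arg_exp_real_I {θ : ℝ} (h : θ ∈ Set.Ioc (-Real.pi) Real.pi) :
    (Complex.exp ((θ:ℂ)*Complex.I)).arg = θ := by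
  rw [Complex.exp_mul_I]
  exact Complex.arg_cos_add_sin_mul_I h

lemma cpow_half (w : ℂ) (hw : w ≠ 0) :
    w ^ ((1:ℂ)/2) = ((Real.sqrt (‖w‖) : ℝ) : ℂ) *
      Complex.exp (((w.arg/2 : ℝ) : ℂ) * Complex.I) := by
  rw [Complex.cpow_def_of_ne_zero hw, Complex.log]
  have h1 : ((Real.log (‖w‖) : ℂ) + (w.arg : ℂ) * Complex.I) * ((1:ℂ)/2)
      = ((Real.log (‖w‖) / 2 : ℝ) : ℂ) + ((w.arg/2 : ℝ) : ℂ) * Complex.I := by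
    push_cast; ring
  rw [h1, Complex.exp_add]
  congr 1
  rw [← Complex.ofReal_exp]
  norm_cast
  rw [Real.sqrt_eq_rpow, Real.rpow_def_of_pos (norm_pos_iff.mpr hw)]
  congr 1
  ring

lemma exp_pi_div_two_I : Complex.exp (((Real.pi/2 : ℝ) : ℂ) * Complex.I) = Complex.I := by
  rw [Complex.exp_mul_I, ← Complex.ofReal_cos, ← Complex.ofReal_sin,
    Real.cos_pi_div_two, Real.sin_pi_div_two]
  simp

lemma key_eval (τ : ℂ) (hτ : τ ≠ 0) (harg1 : 0 < τ.arg) (harg2 : τ.arg < Real.pi) :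
    ((Real.pi : ℂ) / (Complex.exp (2*((Real.pi/4 : ℝ):ℂ)*Complex.I)/τ)) ^ ((1:ℂ)/2) *
      Complex.exp (((Real.pi/4 : ℝ):ℂ)*Complex.I)
    = ((Real.sqrt Real.pi : ℝ) : ℂ) * τ ^ ((1:ℂ)/2) := by
  have hI : Complex.exp (2*((Real.pi/4 : ℝ):ℂ)*Complex.I) = Complex.I := by
    rw [show 2*((Real.pi/4 : ℝ):ℂ)*Complex.I = ((Real.pi/2 : ℝ):ℂ)*Complex.I by
      push_cast; ring]
    exact exp_pi_div_two_I
  have hw : (Real.pi : ℂ) / (Complex.exp (2*((Real.pi/4 : ℝ):ℂ)*Complex.I)/τ)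
      = -((Real.pi : ℂ) * τ * Complex.I) := by
    rw [hI, div_div_eq_mul_div, Complex.div_I]
  have hsub : Complex.exp (((τ.arg - Real.pi/2 : ℝ):ℂ) * Complex.I)
      = Complex.exp ((τ.arg : ℂ) * Complex.I) * (-Complex.I) := by
    rw [show ((τ.arg - Real.pi/2 : ℝ):ℂ) * Complex.I
        = (τ.arg : ℂ) * Complex.I - ((Real.pi/2 : ℝ):ℂ) * Complex.I by push_cast; ring]
    rw [Complex.exp_sub, exp_pi_div_two_I, Complex.div_I]
    ring
  have hwrep : -((Real.pi:ℂ) * τ * Complex.I)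
      = ((Real.pi * ‖τ‖ : ℝ) : ℂ) *
        Complex.exp (((τ.arg - Real.pi/2 : ℝ):ℂ) * Complex.I) := by
    have habs := Complex.norm_mul_exp_arg_mul_I τ
    rw [hsub]
    calc -((Real.pi:ℂ) * τ * Complex.I)
        = -((Real.pi:ℂ) * (((‖τ‖ : ℝ):ℂ) * Complex.exp ((τ.arg:ℂ)*Complex.I))
            * Complex.I) := by rw [habs]
      _ = ((Real.pi * ‖τ‖ : ℝ) : ℂ) *
          (Complex.exp ((τ.arg:ℂ)*Complex.I) * (-Complex.I)) := by push_cast; ring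
  have hwne : -((Real.pi:ℂ) * τ * Complex.I) ≠ 0 := by
    simp [Complex.I_ne_zero, hτ, Real.pi_ne_zero]
  have habsw : ‖(-((Real.pi:ℂ) * τ * Complex.I))‖ = Real.pi * ‖τ‖ := by
    rw [norm_neg, norm_mul, norm_mul, Complex.norm_I, Complex.norm_real, Real.norm_eq_abs,
      abs_of_pos Real.pi_pos, mul_one]
  have hargw : (-((Real.pi:ℂ) * τ * Complex.I)).arg = τ.arg - Real.pi/2 := by
    rw [hwrep, Complex.arg_real_mul _ (mul_pos Real.pi_pos (norm_pos_iff.mpr hτ))]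
    apply arg_exp_real_I
    constructor
    · linarith [Real.pi_pos]
    · linarith [Real.pi_pos]
  rw [hw, cpow_half _ hwne, cpow_half τ hτ, habsw, hargw]
  rw [Real.sqrt_mul Real.pi_pos.le, Complex.ofReal_mul]
  rw [mul_assoc, mul_assoc]
  congr 1
  congr 1
  rw [← Complex.exp_add]
  congr 1
  push_cast
  ring

lemma exp_sq (z : ℂ) : Complex.exp z ^ 2 = Complex.exp (2 * z) := by
  rw [sq, ← Complex.exp_add]; ring_nf

lemma integral_kk_univ (σ τ : ℂ) (hτ : τ ≠ 0) {α : ℝ}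
    (hb : 0 < (Complex.exp (2*(α:ℂ)*Complex.I)/τ).re) :
    ∫ t : ℝ, kk σ τ α t
      = ((Real.pi : ℂ) / (Complex.exp (2*(α:ℂ)*Complex.I)/τ)) ^ ((1:ℂ)/2) *
        (Complex.exp ((α:ℂ)*Complex.I) * Complex.exp (σ^2*τ)) := by
  have hb' : (-(Complex.exp (2*(α:ℂ)*Complex.I)/τ)).re < 0 := by
    rw [Complex.neg_re]; linarith
  have h := integral_cexp_quadratic hb' (-2*σ*Complex.exp ((α:ℂ)*Complex.I)) ((α:ℂ)*Complex.I)
  have hkk : ∀ t : ℝ, kk σ τ α t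
      = Complex.exp (-(Complex.exp (2*(α:ℂ)*Complex.I)/τ) * (t:ℂ)^2 +
          (-2*σ*Complex.exp ((α:ℂ)*Complex.I)) * (t:ℂ) + (α:ℂ)*Complex.I) := fun t => rfl
  rw [show (∫ t : ℝ, kk σ τ α t)
      = ∫ t : ℝ, Complex.exp (-(Complex.exp (2*(α:ℂ)*Complex.I)/τ) * (t:ℂ)^2 +
          (-2*σ*Complex.exp ((α:ℂ)*Complex.I)) * (t:ℂ) + (α:ℂ)*Complex.I) from by rfl]
  rw [h, neg_neg, ← Complex.exp_add]
  congr 1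
  have he : Complex.exp ((α:ℂ)*Complex.I) ^ 2 = Complex.exp (2*(α:ℂ)*Complex.I) := by
    rw [exp_sq]; ring_nf
  have hc2 : (-2*σ*Complex.exp ((α:ℂ)*Complex.I))^2 = 4*σ^2*Complex.exp (2*(α:ℂ)*Complex.I) := by
    rw [mul_pow, mul_pow, he]
    norm_num
  have hne : Complex.exp (2*(α:ℂ)*Complex.I) ≠ 0 := Complex.exp_ne_zero _
  have hdiv : (-2*σ*Complex.exp ((α:ℂ)*Complex.I))^2 /
      (4 * (-(Complex.exp (2*(α:ℂ)*Complex.I)/τ))) = -(σ^2*τ) := by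
    rw [hc2]
    field_simp
  rw [hdiv]
  ring

lemma kk_neg (σ τ : ℂ) (β s : ℝ) : kk σ τ (β + Real.pi) (-s) = - kk σ τ β s := by
  unfold kk
  have h2 : Complex.exp (2*(((β + Real.pi : ℝ)):ℂ)*Complex.I) = Complex.exp (2*(β:ℂ)*Complex.I) := by
    rw [show 2*(((β + Real.pi : ℝ)):ℂ)*Complex.I
        = 2*(β:ℂ)*Complex.I + 2*(Real.pi:ℂ)*Complex.I by push_cast; ring]
    rw [Complex.exp_add, Complex.exp_two_pi_mul_I, mul_one]
  have h1 : Complex.exp ((((β + Real.pi : ℝ)):ℂ)*Complex.I) = -Complex.exp ((β:ℂ)*Complex.I) := by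
    rw [show (((β + Real.pi : ℝ)):ℂ)*Complex.I
        = (β:ℂ)*Complex.I + (Real.pi:ℂ)*Complex.I by push_cast; ring]
    rw [Complex.exp_add, Complex.exp_pi_mul_I, mul_neg_one]
  rw [h2, h1]
  have hX : -(Complex.exp (2*(β:ℂ)*Complex.I)/τ) * ((-s : ℝ):ℂ)^2 +
      (-2*σ*(-Complex.exp ((β:ℂ)*Complex.I))) * ((-s : ℝ):ℂ) + (((β + Real.pi : ℝ)):ℂ)*Complex.I
      = (-(Complex.exp (2*(β:ℂ)*Complex.I)/τ) * (s:ℂ)^2 +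
        (-2*σ*Complex.exp ((β:ℂ)*Complex.I)) * (s:ℂ) + (β:ℂ)*Complex.I) + (Real.pi:ℂ)*Complex.I := by
    push_cast
    ring
  rw [hX, Complex.exp_add, Complex.exp_pi_mul_I]
  ring

lemma ray_pointwise (σ τ : ℂ) (θ : ℝ) {x : ℝ} (hx : 0 < x) :
    ((2*x : ℝ)) • (Complex.exp (-(((x^2 : ℝ) : ℂ) * Complex.exp ((θ:ℂ)*Complex.I))/τ) *
      (((Real.sqrt (x^2) : ℂ))⁻¹ * Complex.exp (-((θ:ℂ)*Complex.I)/2)) *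
      Complex.exp (-2*σ*((Real.sqrt (x^2) : ℂ) * Complex.exp ((θ:ℂ)*Complex.I/2))) *
      Complex.exp ((θ:ℂ)*Complex.I))
    = 2 * kk σ τ (θ/2) x := by
  rw [Real.sqrt_sq hx.le]
  have hxne : (x:ℂ) ≠ 0 := Complex.ofReal_ne_zero.2 hx.ne'
  rw [kk]
  have e1 : Complex.exp (2*(((θ/2 : ℝ)):ℂ)*Complex.I) = Complex.exp ((θ:ℂ)*Complex.I) := by
    congr 1; push_cast; ring
  have e2 : (((θ/2 : ℝ)):ℂ)*Complex.I = (θ:ℂ)*Complex.I/2 := by push_cast; ring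
  rw [e1, e2]
  have hcomb : Complex.exp (-(((x^2 : ℝ):ℂ) * Complex.exp ((θ:ℂ)*Complex.I))/τ) *
      (((x:ℝ):ℂ)⁻¹ * Complex.exp (-((θ:ℂ)*Complex.I)/2)) *
      Complex.exp (-2*σ*(((x:ℝ):ℂ) * Complex.exp ((θ:ℂ)*Complex.I/2))) *
      Complex.exp ((θ:ℂ)*Complex.I)
      = ((x:ℝ):ℂ)⁻¹ * Complex.exp ((-(((x^2 : ℝ):ℂ) * Complex.exp ((θ:ℂ)*Complex.I))/τ) +
          (-((θ:ℂ)*Complex.I)/2) + (-2*σ*(((x:ℝ):ℂ) * Complex.exp ((θ:ℂ)*Complex.I/2))) +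
          (θ:ℂ)*Complex.I) := by
    rw [Complex.exp_add, Complex.exp_add, Complex.exp_add]
    ring
  rw [hcomb]
  have hexp : (-(((x^2 : ℝ):ℂ) * Complex.exp ((θ:ℂ)*Complex.I))/τ) +
      (-((θ:ℂ)*Complex.I)/2) + (-2*σ*(((x:ℝ):ℂ) * Complex.exp ((θ:ℂ)*Complex.I/2))) +
      (θ:ℂ)*Complex.I
      = -(Complex.exp ((θ:ℂ)*Complex.I)/τ) * ((x:ℝ):ℂ)^2 +
        (-2*σ*Complex.exp ((θ:ℂ)*Complex.I/2)) * ((x:ℝ):ℂ) + (θ:ℂ)*Complex.I/2 := by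
    push_cast
    ring
  rw [hexp, Complex.real_smul]
  push_cast
  field_simp

lemma ray_integrableOn (σ τ : ℂ) (θ : ℝ)
    (hb : 0 < (Complex.exp (2*(((θ/2 : ℝ)):ℂ)*Complex.I)/τ).re) :
    MeasureTheory.IntegrableOn (fun r : ℝ =>
        Complex.exp (-((r : ℂ) * Complex.exp ((θ : ℂ) * Complex.I)) / τ) *
          (((Real.sqrt r : ℂ))⁻¹ * Complex.exp (-((θ : ℂ) * Complex.I) / 2)) *
          Complex.exp (-2 * σ * ((Real.sqrt r : ℂ) * Complex.exp ((θ : ℂ) * Complex.I / 2))) *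
          Complex.exp ((θ : ℂ) * Complex.I)) (Set.Ioi 0) := by
  set f : ℝ → ℂ := fun r : ℝ =>
        Complex.exp (-((r : ℂ) * Complex.exp ((θ : ℂ) * Complex.I)) / τ) *
          (((Real.sqrt r : ℂ))⁻¹ * Complex.exp (-((θ : ℂ) * Complex.I) / 2)) *
          Complex.exp (-2 * σ * ((Real.sqrt r : ℂ) * Complex.exp ((θ : ℂ) * Complex.I / 2))) *
          Complex.exp ((θ : ℂ) * Complex.I) with hfdef
  rw [← integrableOn_Ioi_comp_rpow_iff f (two_ne_zero)]
  have heq : ∀ x ∈ Ioi (0:ℝ), (|(2:ℝ)| * x ^ ((2:ℝ) - 1)) • f (x ^ (2:ℝ))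
      = 2 * kk σ τ (θ/2) x := by
    intro x hx
    have hx' : (0:ℝ) < x := hx
    have h1 : x ^ ((2:ℝ) - 1) = x := by norm_num
    have h2 : x ^ ((2:ℝ)) = x ^ 2 := by
      rw [show ((2:ℝ)) = ((2:ℕ):ℝ) by norm_num, Real.rpow_natCast]
    rw [h1, h2, _root_.abs_two, hfdef]
    exact ray_pointwise σ τ θ hx'
  rw [integrableOn_congr_fun heq measurableSet_Ioi]
  exact ((integrable_kk σ τ hb).const_mul 2).integrableOn

lemma ray_integral (σ τ : ℂ) (θ : ℝ) :
    (∫ r in Set.Ioi (0:ℝ),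
        Complex.exp (-((r : ℂ) * Complex.exp ((θ : ℂ) * Complex.I)) / τ) *
          (((Real.sqrt r : ℂ))⁻¹ * Complex.exp (-((θ : ℂ) * Complex.I) / 2)) *
          Complex.exp (-2 * σ * ((Real.sqrt r : ℂ) * Complex.exp ((θ : ℂ) * Complex.I / 2))) *
          Complex.exp ((θ : ℂ) * Complex.I))
      = 2 * ∫ x in Set.Ioi (0:ℝ), kk σ τ (θ/2) x := by
  set f : ℝ → ℂ := fun r : ℝ =>
        Complex.exp (-((r : ℂ) * Complex.exp ((θ : ℂ) * Complex.I)) / τ) *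
          (((Real.sqrt r : ℂ))⁻¹ * Complex.exp (-((θ : ℂ) * Complex.I) / 2)) *
          Complex.exp (-2 * σ * ((Real.sqrt r : ℂ) * Complex.exp ((θ : ℂ) * Complex.I / 2))) *
          Complex.exp ((θ : ℂ) * Complex.I) with hfdef
  have heq : ∀ x ∈ Ioi (0:ℝ), ((2:ℝ) * x ^ ((2:ℝ) - 1)) • f (x ^ (2:ℝ))
      = 2 * kk σ τ (θ/2) x := by
    intro x hx
    have hx' : (0:ℝ) < x := hx
    have h1 : x ^ ((2:ℝ) - 1) = x := by norm_num
    have h2 : x ^ ((2:ℝ)) = x ^ 2 := by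
      rw [show ((2:ℝ)) = ((2:ℕ):ℝ) by norm_num, Real.rpow_natCast]
    rw [h1, h2, hfdef]
    exact ray_pointwise σ τ θ hx'
  rw [← integral_comp_rpow_Ioi_of_pos (g := f) (p := 2) two_pos,
    setIntegral_congr_fun measurableSet_Ioi heq, MeasureTheory.integral_const_mul]


/-- Borel–Laplace representation of `τ^{1/2} e^{σ²τ}` as the difference of two
Laplace-type integrals along the half-lines of directions `θ₁ = -3π/2 + ε` and `θ₂ = π/2 - ε`,
valid for `σ ≠ 0` and `ε < arg τ < π - ε`; both integrals converge absolutely. -/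
theorem statement1 (ε : ℝ) (hε0 : 0 < ε) (hε : ε < Real.pi / 2)
    (θ₁ θ₂ : ℝ) (hθ₁ : θ₁ = -3 * Real.pi / 2 + ε) (hθ₂ : θ₂ = Real.pi / 2 - ε)
    (σ : ℂ) (hσ : σ ≠ 0) (τ : ℂ) (hτ : τ ≠ 0)
    (harg1 : ε < τ.arg) (harg2 : τ.arg < Real.pi - ε) :
    MeasureTheory.IntegrableOn (fun r : ℝ =>
        Complex.exp (-((r : ℂ) * Complex.exp ((θ₁ : ℂ) * Complex.I)) / τ) *
          (((Real.sqrt r : ℂ))⁻¹ * Complex.exp (-((θ₁ : ℂ) * Complex.I) / 2)) *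
          Complex.exp (-2 * σ * ((Real.sqrt r : ℂ) * Complex.exp ((θ₁ : ℂ) * Complex.I / 2))) *
          Complex.exp ((θ₁ : ℂ) * Complex.I)) (Set.Ioi 0) ∧
    MeasureTheory.IntegrableOn (fun r : ℝ =>
        Complex.exp (-((r : ℂ) * Complex.exp ((θ₂ : ℂ) * Complex.I)) / τ) *
          (((Real.sqrt r : ℂ))⁻¹ * Complex.exp (-((θ₂ : ℂ) * Complex.I) / 2)) *
          Complex.exp (-2 * σ * ((Real.sqrt r : ℂ) * Complex.exp ((θ₂ : ℂ) * Complex.I / 2))) *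
          Complex.exp ((θ₂ : ℂ) * Complex.I)) (Set.Ioi 0) ∧
    τ ^ ((1 : ℂ) / 2) * Complex.exp (σ ^ 2 * τ)
      = (1 / (2 * (Real.sqrt Real.pi : ℂ))) *
        (-(∫ r in Set.Ioi (0 : ℝ),
            Complex.exp (-((r : ℂ) * Complex.exp ((θ₁ : ℂ) * Complex.I)) / τ) *
              (((Real.sqrt r : ℂ))⁻¹ * Complex.exp (-((θ₁ : ℂ) * Complex.I) / 2)) *
              Complex.exp (-2 * σ * ((Real.sqrt r : ℂ) * Complex.exp ((θ₁ : ℂ) * Complex.I / 2))) *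
              Complex.exp ((θ₁ : ℂ) * Complex.I))
          + ∫ r in Set.Ioi (0 : ℝ),
            Complex.exp (-((r : ℂ) * Complex.exp ((θ₂ : ℂ) * Complex.I)) / τ) *
              (((Real.sqrt r : ℂ))⁻¹ * Complex.exp (-((θ₂ : ℂ) * Complex.I) / 2)) *
              Complex.exp (-2 * σ * ((Real.sqrt r : ℂ) * Complex.exp ((θ₂ : ℂ) * Complex.I / 2))) *
              Complex.exp ((θ₂ : ℂ) * Complex.I)) := by
  subst hθ₁ hθ₂
  have hπ := Real.pi_pos
  have hφ1 : 0 < τ.arg := lt_trans hε0 harg1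
  have hφ2 : τ.arg < Real.pi := by linarith
  have habsτ : 0 < ‖τ‖ := norm_pos_iff.mpr hτ
  have hc : ∀ α : ℝ, 2*(α:ℂ)*Complex.I = ((2*α : ℝ):ℂ)*Complex.I := fun α => by
    push_cast; ring
  have hpos : ∀ α ∈ Icc (Real.pi/4 - ε/2) (Real.pi/4 + ε/2),
      0 < (Complex.exp (2*(α:ℂ)*Complex.I)/τ).re := by
    intro α hα
    obtain ⟨h1, h2⟩ := hα
    rw [hc α, re_exp_div τ hτ]
    exact mul_pos (inv_pos.2 habsτ)
      (Real.cos_pos_of_mem_Ioo ⟨by linarith, by linarith⟩)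
  have hb4 : 0 < (Complex.exp (2*(((Real.pi/4:ℝ)):ℂ)*Complex.I)/τ).re :=
    hpos _ ⟨by linarith, by linarith⟩
  have hb2' : 0 < (Complex.exp (2*((((Real.pi/2 - ε)/2:ℝ)):ℂ)*Complex.I)/τ).re := by
    rw [show ((Real.pi/2 - ε)/2 : ℝ) = Real.pi/4 - ε/2 by ring]
    exact hpos _ ⟨le_refl _, by linarith⟩
  have hb1' : 0 < (Complex.exp (2*((((-3*Real.pi/2 + ε)/2:ℝ)):ℂ)*Complex.I)/τ).re := by
    rw [hc, re_exp_div τ hτ]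
    refine mul_pos (inv_pos.2 habsτ) ?_
    rw [show 2*((-3*Real.pi/2 + ε)/2) - τ.arg = (Real.pi/2 + ε - τ.arg) - 2*Real.pi by ring,
      Real.cos_sub_two_pi]
    exact Real.cos_pos_of_mem_Ioo ⟨by linarith, by linarith⟩
  refine ⟨ray_integrableOn σ τ _ hb1', ray_integrableOn σ τ _ hb2', ?_⟩
  rw [ray_integral σ τ _, ray_integral σ τ _]
  rw [show ((Real.pi/2 - ε)/2 : ℝ) = Real.pi/4 - ε/2 by ring]
  have hβ : ((-3*Real.pi/2 + ε)/2 : ℝ) + Real.pi = Real.pi/4 + ε/2 := by ring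
  have hneg : ∫ x in Set.Ioi (0:ℝ), kk σ τ ((-3*Real.pi/2 + ε)/2) x
      = - ∫ t in Set.Iic (0:ℝ), kk σ τ (Real.pi/4 + ε/2) t := by
    have h1 : ∫ x in Set.Ioi (0:ℝ), kk σ τ ((-3*Real.pi/2 + ε)/2) x
        = - ∫ x in Set.Ioi (0:ℝ), kk σ τ (Real.pi/4 + ε/2) (-x) := by
      rw [← MeasureTheory.integral_neg]
      apply setIntegral_congr_fun measurableSet_Ioi
      intro x _
      have hkn := kk_neg σ τ ((-3*Real.pi/2 + ε)/2) x
      rw [hβ] at hkn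
      show kk σ τ ((-3*Real.pi/2 + ε)/2) x = -kk σ τ (Real.pi/4 + ε/2) (-x)
      rw [hkn, neg_neg]
    have h2 : ∫ x in Set.Ioi (0:ℝ), kk σ τ (Real.pi/4 + ε/2) (-x)
        = ∫ t in Set.Iic (0:ℝ), kk σ τ (Real.pi/4 + ε/2) t := by
      have hcomp := integral_comp_neg_Iic (c := (0:ℝ))
        (f := fun x => kk σ τ (Real.pi/4 + ε/2) (-x))
      simp only [neg_neg, neg_zero] at hcomp
      exact hcomp.symm
    rw [h1, h2]
  have hDDIoi : ∀ α : ℝ, 0 < (Complex.exp (2*(α:ℂ)*Complex.I)/τ).re →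
      (∫ t in Set.Ioi (0:ℝ), DD σ τ α t) = 0 := fun α h => integral_DD_Ioi σ τ h
  have hDDIic : ∀ α : ℝ, 0 < (Complex.exp (2*(α:ℂ)*Complex.I)/τ).re →
      (∫ t in Set.Iic (0:ℝ), DD σ τ α t) = 0 := fun α h => integral_DD_Iic σ τ h
  have hconstP := F_const σ τ hτ (Set.Ioi 0) hDDIoi
    (a := Real.pi/4 - ε/2) (b := Real.pi/4) (by linarith)
    (fun α hα => hpos α ⟨hα.1, by linarith [hα.2]⟩)
  have hconstM := F_const σ τ hτ (Set.Iic 0) hDDIic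
    (a := Real.pi/4) (b := Real.pi/4 + ε/2) (by linarith)
    (fun α hα => hpos α ⟨by linarith [hα.1], hα.2⟩)
  have hsplit := intervalIntegral.integral_Iic_add_Ioi (b := (0:ℝ))
    ((integrable_kk σ τ hb4).integrableOn) ((integrable_kk σ τ hb4).integrableOn)
  have hval : ∫ t : ℝ, kk σ τ (Real.pi/4) t
      = ((Real.sqrt Real.pi : ℝ) : ℂ) * τ ^ ((1:ℂ)/2) * Complex.exp (σ^2*τ) := by
    rw [integral_kk_univ σ τ hτ hb4, ← mul_assoc, key_eval τ hτ hφ1 hφ2]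
  rw [hval] at hsplit
  rw [hneg, hconstM, ← hconstP]
  have hsqrtπ : ((Real.sqrt Real.pi : ℝ) : ℂ) ≠ 0 :=
    Complex.ofReal_ne_zero.2 (Real.sqrt_pos.2 hπ).ne'
  field_simp
  linear_combination (-1 : ℂ) * hsplit
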